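/- arXiv:1504.02773 — 3 statements merged into one kernel-verified Lean document; each statement's English description precedes it below -/
import Mathlib

section
/- (Theorem 3.19(ii), boundedness of G_ω, componentwise.) Let ã₁, …, ãₙ be BNNs with ãⱼ = (Tⱼ⁺, Iⱼ⁺, Fⱼ⁺, Tⱼ⁻, Iⱼ⁻, Fⱼ⁻). Then each of the six components of G_ω(ã₁, …, ãₙ) lies between the minimum and the maximum of the corresponding input components: min_j Tⱼ⁺ ≤ ∏ⱼ(Tⱼ⁺)^{ωⱼ} ≤ max_j Tⱼ⁺; min_j Iⱼ⁺ ≤ 1 − ∏ⱼ(1 − Iⱼ⁺)^{ωⱼ} ≤ max_j Iⱼ⁺; min_j Fⱼ⁺ ≤ 1 − ∏ⱼ(1 − Fⱼ⁺)^{ωⱼ} ≤ max_j Fⱼ⁺; min_j Tⱼ⁻ ≤ −(1 − ∏ⱼ(1 − (−Tⱼ⁻))^{ωⱼ}) ≤ max_j Tⱼ⁻; min_j Iⱼ⁻ ≤ −∏ⱼ(−Iⱼ⁻)^{ωⱼ} ≤ max_j Iⱼ⁻; and min_j Fⱼ⁻ ≤ −∏ⱼ(−Fⱼ⁻)^{ωⱼ}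 ≤ max_j Fⱼ⁻. -/
/-- Minimum of a finite family of real numbers indexed by `Fin n` with `0 < n`. -/
noncomputable def finMin {n : ℕ} (hn : 1 ≤ n) (x : Fin n → ℝ) : ℝ :=
  Finset.univ.inf' (Finset.univ_nonempty_iff.mpr (Fin.pos_iff_nonempty.mp hn)) x

/-- Maximum of a finite family of real numbers indexed by `Fin n` with `0 < n`. -/
noncomputable def finMax {n : ℕ} (hn : 1 ≤ n) (x : Fin n → ℝ) : ℝ :=
  Finset.univ.sup' (Finset.univ_nonempty_iff.mpr (Fin.pos_iff_nonempty.mp hn)) x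

lemma finMin_le {n : ℕ} (hn : 1 ≤ n) (x : Fin n → ℝ) (j : Fin n) : finMin hn x ≤ x j :=
  Finset.inf'_le _ (Finset.mem_univ j)

lemma le_finMax {n : ℕ} (hn : 1 ≤ n) (x : Fin n → ℝ) (j : Fin n) : x j ≤ finMax hn x :=
  Finset.le_sup' _ (Finset.mem_univ j)

lemma finMin_exists {n : ℕ} (hn : 1 ≤ n) (x : Fin n → ℝ) : ∃ j, finMin hn x = x j := by
  obtain ⟨j, _, hj⟩ := Finset.exists_mem_eq_inf' (Finset.univ_nonempty_iff.mpr (Fin.pos_iff_nonempty.mp hn)) x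
  exact ⟨j, hj⟩

lemma finMax_exists {n : ℕ} (hn : 1 ≤ n) (x : Fin n → ℝ) : ∃ j, finMax hn x = x j := by
  obtain ⟨j, _, hj⟩ := Finset.exists_mem_eq_sup' (Finset.univ_nonempty_iff.mpr (Fin.pos_iff_nonempty.mp hn)) x
  exact ⟨j, hj⟩

lemma finMax_sub {n : ℕ} (hn : 1 ≤ n) (c : ℝ) (x : Fin n → ℝ) :
    finMax hn (fun j => c - x j) = c - finMin hn x := by
  apply le_antisymm
  · apply Finset.sup'_le
    intro j _
    have := finMin_le hn x j
    linarith
  · obtain ⟨j, hj⟩ := finMin_exists hn x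
    have := le_finMax hn (fun j => c - x j) j
    linarith

lemma finMin_sub {n : ℕ} (hn : 1 ≤ n) (c : ℝ) (x : Fin n → ℝ) :
    finMin hn (fun j => c - x j) = c - finMax hn x := by
  apply le_antisymm
  · obtain ⟨j, hj⟩ := finMax_exists hn x
    have := finMin_le hn (fun j => c - x j) j
    linarith
  · apply Finset.le_inf'
    intro j _
    have := le_finMax hn x j
    linarith

lemma core {n : ℕ} (hn : 1 ≤ n) (ω x : Fin n → ℝ)
    (hω : ∀ j, 0 ≤ ω j) (hsum : ∑ j, ω j = 1) (hx : ∀ j, 0 ≤ x j) :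
    finMin hn x ≤ ∏ j, (x j) ^ (ω j) ∧ ∏ j, (x j) ^ (ω j) ≤ finMax hn x := by
  have hm0 : 0 ≤ finMin hn x := by
    obtain ⟨j, hj⟩ := finMin_exists hn x
    rw [hj]; exact hx j
  have hM0 : 0 ≤ finMax hn x := by
    obtain ⟨j, hj⟩ := finMax_exists hn x
    rw [hj]; exact hx j
  constructor
  · calc finMin hn x = (finMin hn x) ^ (∑ j, ω j) := by rw [hsum, Real.rpow_one]
      _ = ∏ j, (finMin hn x) ^ (ω j) :=
          Real.rpow_sum_of_nonneg hm0 (fun j _ => hω j)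
      _ ≤ ∏ j, (x j) ^ (ω j) := by
          apply Finset.prod_le_prod
          · exact fun j _ => Real.rpow_nonneg hm0 _
          · exact fun j _ => Real.rpow_le_rpow hm0 (finMin_le hn x j) (hω j)
  · calc ∏ j, (x j) ^ (ω j) ≤ ∏ j, (finMax hn x) ^ (ω j) := by
          apply Finset.prod_le_prod
          · exact fun j _ => Real.rpow_nonneg (hx j) _
          · exact fun j _ => Real.rpow_le_rpow (hx j) (le_finMax hn x j) (hω j)
      _ = (finMax hn x) ^ (∑ j, ω j) :=
          (Real.rpow_sum_of_nonneg hM0 (fun j _ => hω j)).symm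
      _ = finMax hn x := by rw [hsum, Real.rpow_one]

theorem Gw_bounded
    (n : ℕ) (hn : 1 ≤ n) (ω : Fin n → ℝ)
    (hω : ∀ j, 0 ≤ ω j) (hsum : ∑ j, ω j = 1)
    (Tp Ip Fp Tm Im Fm : Fin n → ℝ)
    (hTp : ∀ j, Tp j ∈ Set.Icc (0 : ℝ) 1) (hIp : ∀ j, Ip j ∈ Set.Icc (0 : ℝ) 1)
    (hFp : ∀ j, Fp j ∈ Set.Icc (0 : ℝ) 1) (hTm : ∀ j, Tm j ∈ Set.Icc (-1 : ℝ) 0)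
    (hIm : ∀ j, Im j ∈ Set.Icc (-1 : ℝ) 0) (hFm : ∀ j, Fm j ∈ Set.Icc (-1 : ℝ) 0) :
    (finMin hn Tp ≤ ∏ j, (Tp j) ^ (ω j) ∧
      ∏ j, (Tp j) ^ (ω j) ≤ finMax hn Tp) ∧
    (finMin hn Ip ≤ 1 - ∏ j, (1 - Ip j) ^ (ω j) ∧
      1 - ∏ j, (1 - Ip j) ^ (ω j) ≤ finMax hn Ip) ∧
    (finMin hn Fp ≤ 1 - ∏ j, (1 - Fp j) ^ (ω j) ∧
      1 - ∏ j, (1 - Fp j) ^ (ω j) ≤ finMax hn Fp) ∧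
    (finMin hn Tm ≤ -(1 - ∏ j, (1 - (-(Tm j))) ^ (ω j)) ∧
      -(1 - ∏ j, (1 - (-(Tm j))) ^ (ω j)) ≤ finMax hn Tm) ∧
    (finMin hn Im ≤ -(∏ j, (-(Im j)) ^ (ω j)) ∧
      -(∏ j, (-(Im j)) ^ (ω j)) ≤ finMax hn Im) ∧
    (finMin hn Fm ≤ -(∏ j, (-(Fm j)) ^ (ω j)) ∧
      -(∏ j, (-(Fm j)) ^ (ω j)) ≤ finMax hn Fm) := by
  refine ⟨core hn ω Tp hω hsum (fun j => (hTp j).1), ?_, ?_, ?_, ?_, ?_⟩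
  · obtain ⟨h1, h2⟩ := core hn ω (fun j => 1 - Ip j) hω hsum
      (fun j => by have := (hIp j).2; linarith)
    rw [finMin_sub, finMax_sub] at *
    exact ⟨by linarith, by linarith⟩
  · obtain ⟨h1, h2⟩ := core hn ω (fun j => 1 - Fp j) hω hsum
      (fun j => by have := (hFp j).2; linarith)
    rw [finMin_sub, finMax_sub] at *
    exact ⟨by linarith, by linarith⟩
  · obtain ⟨h1, h2⟩ := core hn ω (fun j => 1 - -(Tm j)) hω hsum
      (fun j => by have := (hTm j).1; linarith)
    have e1 : finMin hn (fun j => 1 - -(Tm j)) = 1 + finMin hn Tm := by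
      have : (fun j => 1 - -(Tm j)) = (fun j => 1 - (fun k => -(Tm k)) j) := rfl
      rw [this, finMin_sub]
      have : (fun k => -(Tm k)) = (fun k => 0 - Tm k) := by funext k; ring
      rw [this, finMax_sub]; ring
    have e2 : finMax hn (fun j => 1 - -(Tm j)) = 1 + finMax hn Tm := by
      have : (fun j => 1 - -(Tm j)) = (fun j => 1 - (fun k => -(Tm k)) j) := rfl
      rw [this, finMax_sub]
      have : (fun k => -(Tm k)) = (fun k => 0 - Tm k) := by funext k; ring
      rw [this, finMin_sub]; ring
    rw [e1] at h1; rw [e2] at h2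
    exact ⟨by linarith, by linarith⟩
  · obtain ⟨h1, h2⟩ := core hn ω (fun j => -(Im j)) hω hsum
      (fun j => by have := (hIm j).2; linarith)
    have e1 : finMin hn (fun j => -(Im j)) = -finMax hn Im := by
      have : (fun k => -(Im k)) = (fun k => 0 - Im k) := by funext k; ring
      rw [this, finMin_sub]; ring
    have e2 : finMax hn (fun j => -(Im j)) = -finMin hn Im := by
      have : (fun k => -(Im k)) = (fun k => 0 - Im k) := by funext k; ring
      rw [this, finMax_sub]; ring
    rw [e1] at h1; rw [e2] at h2
    exact ⟨by linarith, by linarith⟩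
  · obtain ⟨h1, h2⟩ := core hn ω (fun j => -(Fm j)) hω hsum
      (fun j => by have := (hFm j).2; linarith)
    have e1 : finMin hn (fun j => -(Fm j)) = -finMax hn Fm := by
      have : (fun k => -(Fm k)) = (fun k => 0 - Fm k) := by funext k; ring
      rw [this, finMin_sub]; ring
    have e2 : finMax hn (fun j => -(Fm j)) = -finMin hn Fm := by
      have : (fun k => -(Fm k)) = (fun k => 0 - Fm k) := by funext k; ring
      rw [this, finMax_sub]; ring
    rw [e1] at h1; rw [e2] at h2
    exact ⟨by linarith, by linarith⟩
end

section
/- (Theorem 3.17(iii), monotonicity of A_ω.) Let ã₁, …, ãₙ and ã₁*, …, ãₙ* be BNNs with ãⱼ ⊑ ãⱼ* for all j = 1, …, n. Then A_ω(ã₁, …, ãₙ) ⊑ A_ω(ã₁*, …, ãₙ*), i.e. writing the six components of A_ω(ã₁,…,ãₙ) as (T⁺, I⁺, F⁺, T⁻, I⁻, F⁻) and those of A_ω(ã₁*,…,ãₙ*) as (T⁺*, I⁺*, F⁺*, T⁻*, I⁻*, F⁻*), one has T⁺ ≤ T⁺*, I⁺ ≤ I⁺*, F⁺ ≥ F⁺*,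 T⁻ ≥ T⁻*, I⁻ ≥ I⁻*, and F⁻ ≤ F⁻*. -/
lemma prod_rpow_mono {n : ℕ} (ω a b : Fin n → ℝ)
    (hω : ∀ j, 0 ≤ ω j) (ha : ∀ j, 0 ≤ a j) (hab : ∀ j, a j ≤ b j) :
    ∏ j, (a j) ^ (ω j) ≤ ∏ j, (b j) ^ (ω j) := by
  apply Finset.prod_le_prod
  · intro j _; exact Real.rpow_nonneg (ha j) _
  · intro j _; exact Real.rpow_le_rpow (ha j) (hab j) (hω j)

theorem Aw_monotone
    (n : ℕ) (hn : 1 ≤ n) (ω : Fin n → ℝ)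
    (hω : ∀ j, 0 ≤ ω j) (hsum : ∑ j, ω j = 1)
    (Tp Ip Fp Tm Im Fm Tp' Ip' Fp' Tm' Im' Fm' : Fin n → ℝ)
    (hTp : ∀ j, Tp j ∈ Set.Icc (0 : ℝ) 1) (hIp : ∀ j, Ip j ∈ Set.Icc (0 : ℝ) 1)
    (hFp : ∀ j, Fp j ∈ Set.Icc (0 : ℝ) 1) (hTm : ∀ j, Tm j ∈ Set.Icc (-1 : ℝ) 0)
    (hIm : ∀ j, Im j ∈ Set.Icc (-1 : ℝ) 0) (hFm : ∀ j, Fm j ∈ Set.Icc (-1 : ℝ) 0)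
    (hTp' : ∀ j, Tp' j ∈ Set.Icc (0 : ℝ) 1) (hIp' : ∀ j, Ip' j ∈ Set.Icc (0 : ℝ) 1)
    (hFp' : ∀ j, Fp' j ∈ Set.Icc (0 : ℝ) 1) (hTm' : ∀ j, Tm' j ∈ Set.Icc (-1 : ℝ) 0)
    (hIm' : ∀ j, Im' j ∈ Set.Icc (-1 : ℝ) 0) (hFm' : ∀ j, Fm' j ∈ Set.Icc (-1 : ℝ) 0)
    (hle : ∀ j, Tp j ≤ Tp' j ∧ Ip j ≤ Ip' j ∧ Fp j ≥ Fp' j ∧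
      Tm j ≥ Tm' j ∧ Im j ≥ Im' j ∧ Fm j ≤ Fm' j) :
    (1 - ∏ j, (1 - Tp j) ^ (ω j) ≤ 1 - ∏ j, (1 - Tp' j) ^ (ω j)) ∧
    (∏ j, (Ip j) ^ (ω j) ≤ ∏ j, (Ip' j) ^ (ω j)) ∧
    (∏ j, (Fp j) ^ (ω j) ≥ ∏ j, (Fp' j) ^ (ω j)) ∧
    (-(∏ j, (-(Tm j)) ^ (ω j)) ≥ -(∏ j, (-(Tm' j)) ^ (ω j))) ∧
    (-(1 - ∏ j, (1 - (-(Im j))) ^ (ω j)) ≥ -(1 - ∏ j, (1 - (-(Im' j))) ^ (ω j))) ∧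
    (-(1 - ∏ j, (1 - (-(Fm j))) ^ (ω j)) ≤ -(1 - ∏ j, (1 - (-(Fm' j))) ^ (ω j))) := by
  refine ⟨?_, ?_, ?_, ?_, ?_, ?_⟩
  · have := prod_rpow_mono ω (fun j => 1 - Tp' j) (fun j => 1 - Tp j) hω
      (fun j => by linarith [(hTp' j).2]) (fun j => by linarith [(hle j).1])
    linarith
  · exact prod_rpow_mono ω Ip Ip' hω (fun j => (hIp j).1) (fun j => (hle j).2.1)
  · exact prod_rpow_mono ω Fp' Fp hω (fun j => (hFp' j).1) (fun j => (hle j).2.2.1)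
  · have := prod_rpow_mono ω (fun j => -Tm j) (fun j => -Tm' j) hω
      (fun j => by linarith [(hTm j).2]) (fun j => by linarith [(hle j).2.2.2.1])
    simpa using this
  · have := prod_rpow_mono ω (fun j => 1 - -Im' j) (fun j => 1 - -Im j) hω
      (fun j => by linarith [(hIm' j).1]) (fun j => by linarith [(hle j).2.2.2.2.1])
    simp only [ge_iff_le, neg_le_neg_iff] at *
    linarith
  · have := prod_rpow_mono ω (fun j => 1 - -Fm j) (fun j => 1 - -Fm' j) hω
      (fun j => by linarith [(hFm j).1]) (fun j => by linarith [(hle j).2.2.2.2.2])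
    simp only [neg_le_neg_iff] at *
    linarith
end

section
/- (Theorem 3.19(iii), monotonicity of G_ω.) Let ã₁, …, ãₙ and ã₁*, …, ãₙ* be BNNs with ãⱼ ⊑ ãⱼ* for all j = 1, …, n. Then G_ω(ã₁, …, ãₙ) ⊑ G_ω(ã₁*, …, ãₙ*), i.e. writing the six components of G_ω(ã₁,…,ãₙ) as (T⁺, I⁺, F⁺, T⁻, I⁻, F⁻) and those of G_ω(ã₁*,…,ãₙ*) as (T⁺*, I⁺*, F⁺*, T⁻*, I⁻*, F⁻*), one has T⁺ ≤ T⁺*, I⁺ ≤ I⁺*, F⁺ ≥ F⁺*, T⁻ ≥ T⁻*, I⁻ ≥ I⁻*, and F⁻ ≤ F⁻*. -/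
private lemma prod_rpow_le {n : ℕ} (ω f g : Fin n → ℝ)
    (hω : ∀ j, 0 ≤ ω j) (hf : ∀ j, 0 ≤ f j) (hfg : ∀ j, f j ≤ g j) :
    ∏ j, (f j) ^ (ω j) ≤ ∏ j, (g j) ^ (ω j) := by
  apply Finset.prod_le_prod
  · intro j _; exact Real.rpow_nonneg (hf j) _
  · intro j _; exact Real.rpow_le_rpow (hf j) (hfg j) (hω j)


theorem Gw_monotone
    (n : ℕ) (hn : 1 ≤ n) (ω : Fin n → ℝ)
    (hω : ∀ j, 0 ≤ ω j) (hsum : ∑ j, ω j = 1)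
    (Tp Ip Fp Tm Im Fm Tp' Ip' Fp' Tm' Im' Fm' : Fin n → ℝ)
    (hTp : ∀ j, Tp j ∈ Set.Icc (0 : ℝ) 1) (hIp : ∀ j, Ip j ∈ Set.Icc (0 : ℝ) 1)
    (hFp : ∀ j, Fp j ∈ Set.Icc (0 : ℝ) 1) (hTm : ∀ j, Tm j ∈ Set.Icc (-1 : ℝ) 0)
    (hIm : ∀ j, Im j ∈ Set.Icc (-1 : ℝ) 0) (hFm : ∀ j, Fm j ∈ Set.Icc (-1 : ℝ) 0)
    (hTp' : ∀ j, Tp' j ∈ Set.Icc (0 : ℝ) 1) (hIp' : ∀ j, Ip' j ∈ Set.Icc (0 : ℝ) 1)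
    (hFp' : ∀ j, Fp' j ∈ Set.Icc (0 : ℝ) 1) (hTm' : ∀ j, Tm' j ∈ Set.Icc (-1 : ℝ) 0)
    (hIm' : ∀ j, Im' j ∈ Set.Icc (-1 : ℝ) 0) (hFm' : ∀ j, Fm' j ∈ Set.Icc (-1 : ℝ) 0)
    (hle : ∀ j, Tp j ≤ Tp' j ∧ Ip j ≤ Ip' j ∧ Fp j ≥ Fp' j ∧
      Tm j ≥ Tm' j ∧ Im j ≥ Im' j ∧ Fm j ≤ Fm' j) :
    (∏ j, (Tp j) ^ (ω j) ≤ ∏ j, (Tp' j) ^ (ω j)) ∧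
    (1 - ∏ j, (1 - Ip j) ^ (ω j) ≤ 1 - ∏ j, (1 - Ip' j) ^ (ω j)) ∧
    (1 - ∏ j, (1 - Fp j) ^ (ω j) ≥ 1 - ∏ j, (1 - Fp' j) ^ (ω j)) ∧
    (-(1 - ∏ j, (1 - (-(Tm j))) ^ (ω j)) ≥ -(1 - ∏ j, (1 - (-(Tm' j))) ^ (ω j))) ∧
    (-(∏ j, (-(Im j)) ^ (ω j)) ≥ -(∏ j, (-(Im' j)) ^ (ω j))) ∧
    (-(∏ j, (-(Fm j)) ^ (ω j)) ≤ -(∏ j, (-(Fm' j)) ^ (ω j))) := by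
  refine ⟨?_, ?_, ?_, ?_, ?_, ?_⟩
  · exact prod_rpow_le ω _ _ hω (fun j => (hTp j).1) (fun j => (hle j).1)
  · have := prod_rpow_le ω (fun j => 1 - Ip' j) (fun j => 1 - Ip j) hω
      (fun j => by linarith [(hIp' j).2]) (fun j => by linarith [(hle j).2.1])
    linarith
  · have := prod_rpow_le ω (fun j => 1 - Fp j) (fun j => 1 - Fp' j) hω
      (fun j => by linarith [(hFp j).2]) (fun j => by linarith [(hle j).2.2.1])
    simp only [ge_iff_le]; linarith
  · have := prod_rpow_le ω (fun j => 1 - (-(Tm' j))) (fun j => 1 - (-(Tm j))) hω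
      (fun j => by linarith [(hTm' j).1]) (fun j => by linarith [(hle j).2.2.2.1])
    simp only [ge_iff_le]; linarith
  · have := prod_rpow_le ω (fun j => -(Im j)) (fun j => -(Im' j)) hω
      (fun j => by linarith [(hIm j).2]) (fun j => by linarith [(hle j).2.2.2.2.1])
    simp only [ge_iff_le]; linarith
  · have := prod_rpow_le ω (fun j => -(Fm' j)) (fun j => -(Fm j)) hω
      (fun j => by linarith [(hFm' j).2]) (fun j => by linarith [(hle j).2.2.2.2.2])
    linarith
end
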